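/- There exists a C² function G : (0,∞) → [0,∞), non-increasing, such that G'' ≥ (G')² and G' ≤ 0 on (0,∞), G is supported in (0,1], G(t) ~ -ln t as t → 0⁺, and -G'(t) ≤ 1/t for all t ∈ (0, 1/4]. -/

import Mathlib

open Set Filter

noncomputable section

/-- positive part -/
private def ppart (x : ℝ) : ℝ := max x 0

private lemma ppart_nonneg (x : ℝ) : 0 ≤ ppart x := le_max_right _ _

private lemma ppart_abs_le (x : ℝ) : ppart x ≤ |x| :=
  max_le (le_abs_self x) (abs_nonneg x)

private lemma slope_bound (n : ℕ) (c : ℝ) (hc : 0 ≤ c) (y : ℝ) :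
    ‖slope (fun y => c * (ppart y) ^ (n + 2)) 0 y‖ ≤ c * |y| ^ (n + 1) := by
  rcases eq_or_ne y 0 with rfl | hy
  · simp [slope]
  · have h0 : ppart (0:ℝ) = 0 := max_eq_right le_rfl
    have : slope (fun y => c * (ppart y) ^ (n + 2)) 0 y = c * (ppart y) ^ (n + 2) / y := by
      simp [slope, h0]
      ring
    rw [this, Real.norm_eq_abs, abs_div, div_le_iff₀ (by positivity : (0:ℝ) < |y|)]
    have hpa : |ppart y| ≤ |y| := by
      rw [abs_of_nonneg (ppart_nonneg y)]; exact ppart_abs_le y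
    calc |c * (ppart y) ^ (n + 2)| = c * |ppart y| ^ (n + 2) := by
          rw [abs_mul, abs_of_nonneg hc, abs_pow]
      _ ≤ c * |y| ^ (n + 2) := by gcongr
      _ = c * |y| ^ (n + 1) * |y| := by ring

private lemma hasDerivAt_ppart_pow (n : ℕ) (c : ℝ) (hc : 0 ≤ c) (x : ℝ) :
    HasDerivAt (fun y => c * (ppart y) ^ (n + 2))
      (c * (n + 2) * (ppart x) ^ (n + 1)) x := by
  rcases lt_trichotomy x 0 with h | h | h
  · have hev : (fun y : ℝ => c * (ppart y) ^ (n + 2)) =ᶠ[nhds x] fun _ => 0 := by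
      filter_upwards [eventually_lt_nhds h] with y hy
      simp [ppart, max_eq_right hy.le]
    have hx : ppart x = 0 := max_eq_right h.le
    rw [hx]
    simpa [zero_pow (Nat.succ_ne_zero n)] using
      (hasDerivAt_const x (0 : ℝ)).congr_of_eventuallyEq hev
  · subst h
    have hx : ppart (0 : ℝ) = 0 := max_eq_right le_rfl
    rw [hx]
    simp only [zero_pow (Nat.succ_ne_zero n), mul_zero]
    rw [hasDerivAt_iff_tendsto_slope]
    refine squeeze_zero_norm (slope_bound n c hc) ?_
    have : Filter.Tendsto (fun y : ℝ => c * |y| ^ (n + 1)) (nhds 0) (nhds 0) := by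
      have := ((continuous_abs.pow (n+1)).const_smul c).tendsto (0 : ℝ)
      simpa [Pi.smul_def, Pi.pow_def] using this
    exact this.mono_left nhdsWithin_le_nhds
  · have hev : (fun y : ℝ => c * (ppart y) ^ (n + 2)) =ᶠ[nhds x] fun y => c * y ^ (n + 2) := by
      filter_upwards [eventually_gt_nhds h] with y hy
      simp [ppart, max_eq_left hy.le]
    have hx : ppart x = x := max_eq_left h.le
    rw [hx]
    refine HasDerivAt.congr_of_eventuallyEq ?_ hev
    have := (hasDerivAt_pow (n + 2) x).const_mul c
    refine this.congr_deriv ?_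
    push_cast
    ring

/-- the concave profile `f t = 1 - ((1-t)⁺)³` -/
private def fP (t : ℝ) : ℝ := 1 - (ppart (1 - t)) ^ 3

private def fP' (t : ℝ) : ℝ := 3 * (ppart (1 - t)) ^ 2

private def fP'' (t : ℝ) : ℝ := -(6 * ppart (1 - t))

private lemma hasDerivAt_fP (t : ℝ) : HasDerivAt fP (fP' t) t := by
  have h1 : HasDerivAt (fun s : ℝ => 1 - s) (-1) t := by
    simpa using (hasDerivAt_id t).const_sub 1
  have h2 := (hasDerivAt_ppart_pow 1 1 zero_le_one (1 - t)).comp t h1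
  have h3 := h2.const_sub 1
  have h4 : HasDerivAt fP (-(1 * ((1 : ℕ) + 2 : ℝ) * ppart (1 - t) ^ (1 + 1) * -1)) t := by
    refine h3.congr_of_eventuallyEq ?_
    refine Filter.Eventually.of_forall fun y => ?_
    norm_num [fP, Function.comp]
  convert h4 using 1
  unfold fP'
  push_cast
  ring

private lemma hasDerivAt_fP' (t : ℝ) : HasDerivAt fP' (fP'' t) t := by
  have h1 : HasDerivAt (fun s : ℝ => 1 - s) (-1) t := by
    simpa using (hasDerivAt_id t).const_sub 1
  have h2 := (hasDerivAt_ppart_pow 0 3 (by norm_num) (1 - t)).comp t h1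
  have h4 : HasDerivAt fP' (3 * ((0 : ℕ) + 2 : ℝ) * ppart (1 - t) ^ (0 + 1) * -1) t := by
    refine h2.congr_of_eventuallyEq ?_
    refine Filter.Eventually.of_forall fun y => ?_
    norm_num [fP', Function.comp]
  convert h4 using 1
  unfold fP''
  push_cast
  ring

private lemma continuous_ppart : Continuous ppart := continuous_id.max continuous_const

private lemma contDiff_fP : ContDiff ℝ 2 fP := by
  have hd1 : deriv fP = fP' := funext fun t => (hasDerivAt_fP t).deriv
  have hd2 : deriv fP' = fP'' := funext fun t => (hasDerivAt_fP' t).deriv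
  rw [show (2 : WithTop ℕ∞) = 1 + 1 by norm_num, contDiff_succ_iff_deriv]
  refine ⟨fun t => (hasDerivAt_fP t).differentiableAt, by simp, ?_⟩
  rw [hd1, show (1 : WithTop ℕ∞) = 0 + 1 by norm_num, contDiff_succ_iff_deriv]
  refine ⟨fun t => (hasDerivAt_fP' t).differentiableAt, by simp, ?_⟩
  rw [hd2, contDiff_zero]
  unfold fP'' ppart
  continuity

private lemma quad_pos (t : ℝ) : 0 < t ^ 2 - 3 * t + 3 := by nlinarith [sq_nonneg (t - 3/2)]

private lemma fP_pos {t : ℝ} (ht : 0 < t) : 0 < fP t := by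
  unfold fP
  rcases le_or_gt 1 t with h | h
  · have : ppart (1 - t) = 0 := max_eq_right (by linarith)
    simp [this]
  · have hp : ppart (1 - t) = 1 - t := max_eq_left (by linarith)
    rw [hp]
    nlinarith [mul_pos ht (quad_pos t)]
 
private lemma fP_le_one (t : ℝ) : fP t ≤ 1 := by
  unfold fP
  have := ppart_nonneg (1 - t)
  nlinarith [pow_nonneg (ppart_nonneg (1 - t)) 3]

private lemma fP_eq {t : ℝ} (ht : t ≤ 1) : fP t = t * (t ^ 2 - 3 * t + 3) := by
  unfold fP
  rw [show ppart (1 - t) = 1 - t from max_eq_left (by linarith)]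
  ring

/-- the function G -/
private def GG (t : ℝ) : ℝ := -Real.log (fP t)

private def DD (t : ℝ) : ℝ := -(fP' t / fP t)

private lemma hasDerivAt_GG {t : ℝ} (ht : 0 < t) : HasDerivAt GG (DD t) t := by
  have h1 := (Real.hasDerivAt_log (ne_of_gt (fP_pos ht))).comp t (hasDerivAt_fP t)
  have h2 : HasDerivAt GG (-((fP t)⁻¹ * fP' t)) t := by
    refine h1.neg.congr_of_eventuallyEq ?_
    filter_upwards with y
    simp [GG, Function.comp]
  convert h2 using 1
  rw [DD, div_eq_inv_mul]

private lemma deriv_GG {t : ℝ} (ht : 0 < t) : deriv GG t = DD t := (hasDerivAt_GG ht).deriv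

private lemma hasDerivAt_DD {t : ℝ} (ht : 0 < t) :
    HasDerivAt DD (-((fP'' t * fP t - fP' t * fP' t) / (fP t) ^ 2)) t := by
  exact ((hasDerivAt_fP' t).div (hasDerivAt_fP t) (ne_of_gt (fP_pos ht))).neg

private lemma deriv_deriv_GG {t : ℝ} (ht : 0 < t) :
    deriv (deriv GG) t = -((fP'' t * fP t - fP' t * fP' t) / (fP t) ^ 2) := by
  have hev : deriv GG =ᶠ[nhds t] DD := by
    filter_upwards [isOpen_Ioi.mem_nhds (show t ∈ Ioi (0:ℝ) from ht)] with y hy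
    exact deriv_GG hy
  rw [hev.deriv_eq]
  exact (hasDerivAt_DD ht).deriv

/-- There exists a C² function `G : (0,∞) → [0,∞)`, non-increasing, with
`G'' ≥ (G')²` and `G' ≤ 0` on `(0,∞)`, supported in `(0,1]`,
`G(t) ~ -ln t` as `t → 0⁺`, and `-G'(t) ≤ 1/t` for `t ∈ (0,1/4]`. -/
theorem exists_log_like_convex_function :
    ∃ G : ℝ → ℝ,
      ContDiffOn ℝ 2 G (Ioi 0) ∧
      (∀ t ∈ Ioi (0 : ℝ), 0 ≤ G t) ∧
      AntitoneOn G (Ioi 0) ∧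
      (∀ t ∈ Ioi (0 : ℝ), deriv G t ≤ 0) ∧
      (∀ t ∈ Ioi (0 : ℝ), (deriv G t) ^ 2 ≤ deriv (deriv G) t) ∧
      (∀ t : ℝ, 1 < t → G t = 0) ∧
      Tendsto (fun t => G t / (-Real.log t)) (nhdsWithin 0 (Ioi 0)) (nhds 1) ∧
      (∀ t ∈ Ioc (0 : ℝ) (1 / 4), -deriv G t ≤ 1 / t) := by
  refine ⟨GG, ?_, ?_, ?_, ?_, ?_, ?_, ?_, ?_⟩
  · -- ContDiffOn
    have h1 : ContDiffOn ℝ 2 (fun t => Real.log (fP t)) (Ioi 0) := by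
      refine Real.contDiffOn_log.comp contDiff_fP.contDiffOn ?_
      intro t ht
      exact ne_of_gt (fP_pos ht)
    exact h1.neg
  · -- nonneg
    intro t ht
    have := Real.log_nonpos (le_of_lt (fP_pos ht)) (fP_le_one t)
    simp only [GG]
    linarith
  · -- antitone
    have hD : ∀ t ∈ Ioi (0:ℝ), deriv GG t ≤ 0 := by
      intro t ht
      rw [deriv_GG ht, DD]
      have hnum : 0 ≤ fP' t := by unfold fP'; positivity
      have h1 : 0 ≤ fP' t / fP t := div_nonneg hnum (le_of_lt (fP_pos ht))
      linarith
    refine antitoneOn_of_deriv_nonpos (convex_Ioi 0) ?_ ?_ ?_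
    · exact fun t ht => ((hasDerivAt_GG ht).differentiableAt).continuousAt.continuousWithinAt
    · intro t ht
      rw [interior_Ioi] at ht
      exact ((hasDerivAt_GG ht).differentiableAt).differentiableWithinAt
    · intro t ht
      rw [interior_Ioi] at ht
      exact hD t ht
  · -- deriv ≤ 0
    intro t ht
    rw [deriv_GG ht, DD]
    have h1 : 0 ≤ fP' t / fP t := by
      refine div_nonneg ?_ (le_of_lt (fP_pos ht))
      have := ppart_nonneg (1 - t)
      unfold fP'
      positivity
    linarith
  · -- convexity inequality
    intro t ht
    rw [deriv_GG ht, deriv_deriv_GG ht, DD]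
    have hf := fP_pos ht
    have hf'' : fP'' t ≤ 0 := by
      have := ppart_nonneg (1 - t); unfold fP''; linarith
    have hL : (-(fP' t / fP t)) ^ 2 = fP' t ^ 2 / fP t ^ 2 := by rw [neg_sq, div_pow]
    have hR : -((fP'' t * fP t - fP' t * fP' t) / fP t ^ 2) =
        fP' t ^ 2 / fP t ^ 2 + -(fP'' t) * fP t / fP t ^ 2 := by ring
    rw [hL, hR]
    have h2 : 0 ≤ -(fP'' t) * fP t / fP t ^ 2 :=
      div_nonneg (mul_nonneg (by linarith) hf.le) (by positivity)
    linarith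
  · -- support
    intro t ht
    have : ppart (1 - t) = 0 := max_eq_right (by linarith)
    simp [GG, fP, this]
  · -- asymptotics
    have hev : (fun t => GG t / (-Real.log t)) =ᶠ[nhdsWithin 0 (Ioi 0)]
        (fun t => 1 + -Real.log (t ^ 2 - 3 * t + 3) * (-Real.log t)⁻¹) := by
      filter_upwards [Ioo_mem_nhdsGT_of_mem (show (0:ℝ) ∈ Ico 0 1 by simp)] with t ht
      obtain ⟨ht0, ht1⟩ := ht
      have hlt : Real.log t < 0 := Real.log_neg ht0 ht1
      have hq := quad_pos t
      have hG : GG t = -(Real.log t + Real.log (t ^ 2 - 3 * t + 3)) := by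
        rw [GG, fP_eq ht1.le, Real.log_mul (ne_of_gt ht0) (ne_of_gt hq)]
      rw [hG]
      have hne : Real.log t ≠ 0 := ne_of_lt hlt
      rw [neg_div_neg_eq, add_div, div_self hne, inv_neg, neg_mul_neg, div_eq_mul_inv]
    refine Tendsto.congr' hev.symm ?_
    have h1 : Tendsto (fun t : ℝ => -Real.log (t ^ 2 - 3 * t + 3)) (nhdsWithin 0 (Ioi 0))
        (nhds (-Real.log 3)) := by
      have ht3 : Tendsto (fun t : ℝ => t ^ 2 - 3 * t + 3) (nhdsWithin 0 (Ioi 0)) (nhds 3) := by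
        have hca : ContinuousAt (fun t : ℝ => t ^ 2 - 3 * t + 3) 0 := by fun_prop
        have h := hca.tendsto.mono_left (nhdsWithin_le_nhds (s := Ioi (0:ℝ)))
        norm_num at h
        exact h
      have hlog : Tendsto Real.log (nhds 3) (nhds (Real.log 3)) :=
        (Real.continuousAt_log (by norm_num : (3:ℝ) ≠ 0)).tendsto
      exact (hlog.comp ht3).neg
    have h2 : Tendsto (fun t : ℝ => (-Real.log t)⁻¹) (nhdsWithin 0 (Ioi 0)) (nhds 0) := by
      have h2' : Tendsto (fun t : ℝ => -Real.log t) (nhdsWithin 0 (Ioi 0)) atTop :=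
        tendsto_neg_atBot_atTop.comp Real.tendsto_log_nhdsGT_zero
      exact h2'.inv_tendsto_atTop
    have := (h1.mul h2).const_add 1
    simpa using this
  · -- derivative bound
    intro t ht
    obtain ⟨ht0, ht4⟩ := ht
    have ht1 : t < 1 := by linarith
    rw [deriv_GG ht0, DD, neg_neg]
    have hp : ppart (1 - t) = 1 - t := max_eq_left (by linarith)
    have hf : fP t = t * (t ^ 2 - 3 * t + 3) := fP_eq ht1.le
    rw [fP', hp, hf]
    rw [div_le_div_iff₀ (mul_pos ht0 (quad_pos t)) ht0]
    have hq := quad_pos t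
    nlinarith
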